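/- Let ρ be a probability measure on Y, let t ∈ [0,1), and let a* ∈ A attain θ_ρ(t), i.e. quantile_{1−t}(u(a*,·); ρ) = θ_ρ(t). Define C_t = {y ∈ Y : u(a*, y) ≥ θ_ρ(t)}. Then: (i) C_t is nonempty; (ii) ρ(C_t) > t, and in particular ρ(C_t) ≥ t; and (iii) max_{a∈A} min_{y∈C_t} u(a,y) = θ_ρ(t). That is, among all sets with conditional coverage at least t, the set C_t attains the maximal max-min value, which equals θ_ρ(t). -/

import Mathlib

open MeasureTheory ENNReal

/-- The `α`-quantile of `f` under `ρ`: `inf {z | ρ{y : f y ≤ z} ≥ α}`. -/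
noncomputable def quantileRA {Y : Type*} [Fintype Y] [MeasurableSpace Y]
    (ρ : Measure Y) (f : Y → ℝ) (α : ℝ) : ℝ :=
  sInf {z : ℝ | ENNReal.ofReal α ≤ ρ {y | f y ≤ z}}

/-- The set `C_t = {y : u(a*, y) ≥ θ_ρ(t)}`, where `a*` attains
`θ_ρ(t) = max_a quantile_{1-t}(u(a,·); ρ)`, is nonempty, has coverage exceeding (hence at
least) `t`, and its max-min value equals `θ_ρ(t)`. -/
theorem stmt_7 {Y A : Type*} [Fintype Y] [Nonempty Y] [Fintype A] [Nonempty A]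
    [MeasurableSpace Y] [MeasurableSingletonClass Y]
    (u : A → Y → ℝ)
    (ρ : Measure Y) [IsProbabilityMeasure ρ]
    (t : ℝ) (ht0 : 0 ≤ t) (ht1 : t < 1)
    (θt : ℝ)
    (hθt : θt = Finset.univ.sup' Finset.univ_nonempty
      (fun a => quantileRA ρ (u a) (1 - t)))
    (astar : A) (hastar : quantileRA ρ (u astar) (1 - t) = θt)
    (Ct : Finset Y)
    (hCt : Ct = Finset.univ.filter (fun y => θt ≤ u astar y)) :
    ∃ hne : Ct.Nonempty,
      ENNReal.ofReal t < ρ ↑Ct ∧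
      ENNReal.ofReal t ≤ ρ ↑Ct ∧
      Finset.univ.sup' Finset.univ_nonempty (fun a => Ct.inf' hne (u a)) = θt := by
  have hα0 : (0:ℝ) < 1 - t := by linarith
  set α : ℝ≥0∞ := ENNReal.ofReal (1 - t) with hαdef
  have hαpos : 0 < α := ENNReal.ofReal_pos.mpr hα0
  -- the quantile sets
  set S : A → Set ℝ := fun a => {z : ℝ | α ≤ ρ {y | u a y ≤ z}} with hSdef
  have hq : ∀ a, quantileRA ρ (u a) (1 - t) = sInf (S a) := fun a => rfl
  have hSne : ∀ a : A, (S a).Nonempty := by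
    intro a
    refine ⟨Finset.univ.sup' Finset.univ_nonempty (u a), ?_⟩
    have huniv : {y | u a y ≤ Finset.univ.sup' Finset.univ_nonempty (u a)} = Set.univ := by
      refine Set.eq_univ_iff_forall.mpr fun y => ?_
      exact Finset.le_sup' (u a) (Finset.mem_univ y)
    simp only [hSdef, Set.mem_setOf_eq, huniv, measure_univ]
    rw [hαdef, ← ENNReal.ofReal_one]
    exact ENNReal.ofReal_le_ofReal (by linarith)
  have hSbdd : BddBelow (S astar) := by
    refine ⟨Finset.univ.inf' Finset.univ_nonempty (u astar), fun z hz => ?_⟩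
    by_contra h
    push_neg at h
    have hempty : {y | u astar y ≤ z} = (∅ : Set Y) := by
      refine Set.eq_empty_iff_forall_notMem.mpr fun y hy => ?_
      have : Finset.univ.inf' Finset.univ_nonempty (u astar) ≤ u astar y :=
        Finset.inf'_le (u astar) (Finset.mem_univ y)
      exact absurd (le_trans this hy) (not_le.mpr h)
    rw [hSdef] at hz
    simp only [Set.mem_setOf_eq, hempty, measure_empty] at hz
    exact absurd hz (not_le.mpr hαpos)
  have hθS : sInf (S astar) = θt := hastar
  -- (i) nonemptiness
  have hne : Ct.Nonempty := by
    by_contra hemp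
    rw [Finset.not_nonempty_iff_eq_empty, hCt, Finset.filter_eq_empty_iff] at hemp
    have hlt : ∀ y : Y, u astar y < θt := fun y => not_le.mp (hemp (Finset.mem_univ y))
    set z := Finset.univ.sup' Finset.univ_nonempty (u astar) with hzdef
    have hzS : z ∈ S astar := by
      have huniv : {y | u astar y ≤ z} = Set.univ := by
        refine Set.eq_univ_iff_forall.mpr fun y => ?_
        exact Finset.le_sup' (u astar) (Finset.mem_univ y)
      simp only [hSdef, Set.mem_setOf_eq, huniv, measure_univ]
      rw [hαdef, ← ENNReal.ofReal_one]
      exact ENNReal.ofReal_le_ofReal (by linarith)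
    have h1 : θt ≤ z := hθS ▸ csInf_le hSbdd hzS
    have h2 : z < θt := by
      rw [hzdef, Finset.sup'_lt_iff]
      exact fun y _ => hlt y
    linarith
  -- the coercion of Ct
  have hCtcoe : (↑Ct : Set Y) = {y | θt ≤ u astar y} := by
    ext y; simp [hCt]
  have hCtcompl : (↑Ct : Set Y)ᶜ = {y | u astar y < θt} := by
    rw [hCtcoe]; ext y; simp [not_le]
  -- key: ρ of the complement is < α
  have hCc_lt : ρ {y | u astar y < θt} < α := by
    by_cases hF : (Finset.univ.filter (fun y => u astar y < θt) : Finset Y).Nonempty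
    · set z := (Finset.univ.filter (fun y => u astar y < θt)).sup' hF (u astar) with hzdef
      have hzlt : z < θt := by
        rw [hzdef, Finset.sup'_lt_iff]
        intro y hy
        exact (Finset.mem_filter.mp hy).2
      have hznS : z ∉ S astar := by
        intro hzS
        have : θt ≤ z := hθS ▸ csInf_le hSbdd hzS
        linarith
      have hρz : ρ {y | u astar y ≤ z} < α := by
        rw [hSdef] at hznS
        simpa using not_le.mp hznS
      refine lt_of_le_of_lt (measure_mono ?_) hρz
      intro y hy
      have hy' : y ∈ Finset.univ.filter (fun y => u astar y < θt) :=
        Finset.mem_filter.mpr ⟨Finset.mem_univ y, hy⟩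
      exact Finset.le_sup' (u astar) hy'
    · rw [Finset.not_nonempty_iff_eq_empty, Finset.filter_eq_empty_iff] at hF
      have : {y | u astar y < θt} = (∅ : Set Y) := by
        refine Set.eq_empty_iff_forall_notMem.mpr fun y hy => hF (Finset.mem_univ y) hy
      rw [this, measure_empty]
      exact hαpos
  -- (ii) coverage
  have hmeas : MeasurableSet (↑Ct : Set Y) := (Set.to_countable _).measurableSet
  have hsum : ρ ↑Ct + ρ ((↑Ct : Set Y)ᶜ) = 1 := by
    rw [measure_add_measure_compl hmeas, measure_univ]
  have hcov : ENNReal.ofReal t < ρ ↑Ct := by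
    by_contra hcon
    push_neg at hcon
    have : (1:ℝ≥0∞) < 1 := by
      calc (1:ℝ≥0∞) = ρ ↑Ct + ρ ((↑Ct : Set Y)ᶜ) := hsum.symm
        _ ≤ ENNReal.ofReal t + ρ ((↑Ct : Set Y)ᶜ) := add_le_add_left hcon _
        _ < ENNReal.ofReal t + α := ENNReal.add_lt_add_left ENNReal.ofReal_ne_top
            (by rw [hCtcompl]; exact hCc_lt)
        _ = ENNReal.ofReal (t + (1 - t)) := (ENNReal.ofReal_add ht0 hα0.le).symm
        _ = 1 := by norm_num
    exact absurd this (lt_irrefl _)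
  -- (iii) max-min
  have hub : ∀ a : A, Ct.inf' hne (u a) ≤ θt := by
    intro a
    by_contra hcon
    push_neg at hcon
    set m := Ct.inf' hne (u a) with hmdef
    have hqa : quantileRA ρ (u a) (1 - t) ≤ θt := by
      rw [hθt]
      exact Finset.le_sup' (fun a => quantileRA ρ (u a) (1 - t)) (Finset.mem_univ a)
    have hmle : m ≤ sInf (S a) := by
      refine le_csInf (hSne a) fun z hz => ?_
      by_contra hzm
      push_neg at hzm
      have hsub : {y | u a y ≤ z} ⊆ {y | u astar y < θt} := by
        intro y hy
        by_contra hyc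
        have hyCt : y ∈ Ct := by
          rw [hCt]
          exact Finset.mem_filter.mpr ⟨Finset.mem_univ y, not_lt.mp hyc⟩
        have : m ≤ u a y := Finset.inf'_le (u a) hyCt
        exact absurd (le_trans this hy) (not_le.mpr hzm)
      have : ρ {y | u a y ≤ z} < α := lt_of_le_of_lt (measure_mono hsub) hCc_lt
      rw [hSdef] at hz
      exact absurd hz (not_le.mpr this)
    rw [hq a] at hqa
    linarith
  refine ⟨hne, hcov, hcov.le, le_antisymm (Finset.sup'_le _ _ fun a _ => hub a) ?_⟩
  refine Finset.le_sup'_of_le _ (Finset.mem_univ astar) ?_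
  refine Finset.le_inf' _ _ fun y hy => ?_
  rw [hCt] at hy
  exact (Finset.mem_filter.mp hy).2
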